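/- Let q ≥ 3 and n ≥ 3, and let w ∈ A_q(n). Then every prefix u of w satisfies |u|_0 ≤ |u|_1, and every proper prefix u of w with |u| > ⌊n/2⌋ satisfies |u|_0 < |u|_1. -/
import Mathlib


/-- Value of a letter: 1 ↦ +1, 0 ↦ -1, other letters ↦ 0. -/
def mval (a : ℕ) : ℤ := if a = 1 then 1 else if a = 0 then -1 else 0

/-- Value-sum of a word. -/
def vsum (w : List ℕ) : ℤ := (w.map mval).sum

/-- A (q-2)-colored Motzkin word over the alphabet Z_q = {0,...,q-1}:
all letters < q, every prefix has nonnegative value-sum, total value-sum 0. -/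
def IsMotzkinWord (q : ℕ) (w : List ℕ) : Prop :=
  (∀ a ∈ w, a < q) ∧ (∀ u, u <+: w → 0 ≤ vsum u) ∧ vsum w = 0

/-- The set 𝓜_{q-2}(n) of (q-2)-colored Motzkin words of length n. -/
def MotzkinSet (q n : ℕ) : Set (List ℕ) := {w | w.length = n ∧ IsMotzkinWord q w}

/-- M_{q-2}(n), the number of (q-2)-colored Motzkin words of length n. -/
noncomputable def Mnum (q n : ℕ) : ℕ := (MotzkinSet q n).ncard

/-- The set Ê_{q-2}(n) of elevated (q-2)-colored Motzkin words of length n: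
words 1α0 with α ∈ 𝓜_{q-2}(n-2). -/
def ElevatedSet (q n : ℕ) : Set (List ℕ) :=
  {w | w.length = n ∧ ∃ α ∈ MotzkinSet q (n - 2), w = 1 :: (α ++ [0])}

/-- The set A_q(n). -/
def SetA (q n : ℕ) : Set (List ℕ) :=
  {w | ∃ i ≤ n / 2, ∃ α ∈ MotzkinSet q i, ∃ β ∈ ElevatedSet q (n - i), w = α ++ β} \
    {w | ∃ α ∈ ElevatedSet q (n / 2), ∃ β ∈ ElevatedSet q (n / 2), w = α ++ β}

/-- The set B_q(n). -/
def SetB (q n : ℕ) : Set (List ℕ) :=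
  {w | ∃ i ≤ n / 2 - 1, ∃ α ∈ MotzkinSet q i, ∃ β ∈ ElevatedSet q (n - i - 1),
    w = 1 :: (α ++ β)}

/-- The set C_q(n): words γ0 with γ a (q-2)-colored Motzkin word of length n-1
having no factor which is an elevated Motzkin word of length j ≥ ⌈n/2⌉. -/
def SetC (q n : ℕ) : Set (List ℕ) :=
  {w | ∃ γ ∈ MotzkinSet q (n - 1),
    (∀ j, (n + 1) / 2 ≤ j → ∀ β ∈ ElevatedSet q j, ¬ β <:+: γ) ∧ w = γ ++ [0]}

/-- The cross-bifix-free candidate set CBFS_q(n). -/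
def CBFS (q n : ℕ) : Set (List ℕ) := SetA q n ∪ SetB q n ∪ SetC q n

/-- A word is bifix-free if no nonempty proper prefix of it is also a suffix of it. -/
def BifixFree (w : List ℕ) : Prop :=
  ∀ u, u <+: w → u ≠ [] → u.length < w.length → ¬ u <:+ w

/-- BF_q(n): the set of bifix-free words of length n over Z_q. -/
def BF (q n : ℕ) : Set (List ℕ) := {w | w.length = n ∧ (∀ a ∈ w, a < q) ∧ BifixFree w}

/-- F_{k,q}(n): the number of words of length n over Z_q avoiding k consecutive 0's. -/
noncomputable def Fcount (k q n : ℕ) : ℕ :=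
  {w : List ℕ | w.length = n ∧ (∀ a ∈ w, a < q) ∧ ¬ List.replicate k 0 <:+: w}.ncard

/-- The set S_{k,q}(n) of Bajic--Stojanovic--Chee--Kiah type words: words s of length n
over Z_q with s₁ = ⋯ = s_k = 0, s_{k+1} ≠ 0, s_n ≠ 0, and such that the subword
s_{k+2} ⋯ s_{n-1} contains no k consecutive 0's. -/
def SetS (q k n : ℕ) : Set (List ℕ) :=
  {s | s.length = n ∧ (∀ a ∈ s, a < q) ∧ s.take k = List.replicate k 0 ∧
    s.getD k 0 ≠ 0 ∧ s.getLast? ≠ some 0 ∧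
    ¬ List.replicate k 0 <:+: (s.drop (k + 1)).take (n - k - 2)}


lemma vsum_count (u : List ℕ) : vsum u = (u.count 1 : ℤ) - u.count 0 := by
  induction u with
  | nil => simp [vsum]
  | cons a t ih =>
    have : vsum (a :: t) = mval a + vsum t := by simp [vsum]
    rw [this, ih]
    rcases eq_or_ne a 1 with h1 | h1
    · subst h1; simp [mval, List.count_cons]; ring
    rcases eq_or_ne a 0 with h0 | h0
    · subst h0; simp [mval, List.count_cons]; ring
    · simp [mval, h0, h1, List.count_cons, Ne.symm h0, Ne.symm h1]

lemma vsum_append (a b : List ℕ) : vsum (a ++ b) = vsum a + vsum b := by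
  simp [vsum]

/-- key: vsum of any prefix of an element of SetA is ≥ 0, and > 0 under extra conditions -/
theorem setA_prefix_counts (q n : ℕ) (hq : 3 ≤ q) (hn : 3 ≤ n)
    (w : List ℕ) (hw : w ∈ SetA q n) :
    (∀ u, u <+: w → u.count 0 ≤ u.count 1) ∧
    (∀ u, u <+: w → u.length < w.length → n / 2 < u.length → u.count 0 < u.count 1) := by
  obtain ⟨⟨i, hi, α, hα, β, hβ, rfl⟩, -⟩ := hw
  obtain ⟨hαlen, hαq, hαpre, hαsum⟩ := hα
  obtain ⟨hβlen, γ, ⟨hγlen, hγq, hγpre, hγsum⟩, rfl⟩ := hβ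
  -- vsum of prefixes of β-part
  have key : ∀ v, v <+: (1 :: (γ ++ [0])) → v.length < γ.length + 2 → 0 < v.length →
      1 ≤ vsum v := by
    rintro (_ | ⟨b, p⟩) hv hlen hpos
    · simp at hpos
    · rw [List.cons_prefix_cons] at hv
      obtain ⟨rfl, hp⟩ := hv
      have hplen : p.length ≤ γ.length := by
        simp at hlen; omega
      have hpγ : p <+: γ :=
        List.prefix_of_prefix_length_le hp (List.prefix_append γ [0]) hplen
      have := hγpre p hpγ
      have : vsum (1 :: p) = 1 + vsum p := by simp [vsum, mval]
      rw [this]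
      linarith [hγpre p hpγ]
  have key0 : ∀ v, v <+: (1 :: (γ ++ [0])) → 0 ≤ vsum v := by
    intro v hv
    rcases eq_or_ne v.length (γ.length + 2) with he | hne
    · have : v = 1 :: (γ ++ [0]) := by
        apply List.Sublist.eq_of_length hv.sublist
        simpa using he
      subst this
      have : vsum (1 :: (γ ++ [0])) = 1 + vsum γ + (-1) := by
        simp [vsum_append, vsum, mval]
      rw [this, hγsum]; norm_num
    · rcases Nat.eq_zero_or_pos v.length with h0 | h0
      · rw [List.length_eq_zero_iff] at h0; subst h0; simp [vsum]
      · have hlt : v.length < γ.length + 2 := by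
          have := hv.length_le; simp at this; omega
        linarith [key v hv hlt h0]
  -- decomposition of prefixes of α ++ β
  have decomp : ∀ u, u <+: α ++ (1 :: (γ ++ [0])) →
      u <+: α ∨ ∃ v, v <+: (1 :: (γ ++ [0])) ∧ u = α ++ v := by
    intro u hu
    rcases le_or_gt u.length α.length with h | h
    · left
      exact List.prefix_of_prefix_length_le hu (List.prefix_append α _) h
    · right
      have hαu : α <+: u :=
        List.prefix_of_prefix_length_le (List.prefix_append α _) hu h.le
      obtain ⟨v, rfl⟩ := hαu
      refine ⟨v, ?_, rfl⟩
      obtain ⟨t, ht⟩ := hu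
      exact ⟨t, by simpa using ht⟩
  constructor
  · intro u hu
    have h : 0 ≤ vsum u := by
      rcases decomp u hu with h | ⟨v, hv, rfl⟩
      · exact hαpre u h
      · rw [vsum_append, hαsum, zero_add]
        exact key0 v hv
    rw [vsum_count] at h
    omega
  · intro u hu hulen hhalf
    have hαshort : α.length ≤ n / 2 := by rw [hαlen]; exact hi
    have h : 1 ≤ vsum u := by
      rcases decomp u hu with h | ⟨v, hv, rfl⟩
      · exfalso
        have := h.length_le
        omega
      · rw [vsum_append, hαsum, zero_add]
        apply key v hv
        · have : (α ++ (1 :: (γ ++ [0]))).length = α.length + (γ.length + 2) := by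
            simp
          simp only [List.length_append] at hulen ⊢
          omega
        · simp only [List.length_append] at hhalf
          omega
    rw [vsum_count] at h
    omega
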